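/- Let d, Nα, Nβ ≥ 1, N = Nα + Nβ, let X_1,…,X_N ⊆ ℝ^d be open sets, and let u_1,…,u_N with u_i : X_i → ℝ satisfy the splitting inequality for the cost c. Fix x_1⁰ ∈ X_1 and suppose that for k = 1, 2 the points (x_1⁰, x_{2k},…,x_{Nα k}, y_{1k},…,y_{Nβ k}) ∈ X_1×…×X_N attain equality in the splitting inequality. Write x_{11} = x_{12} = x_1⁰. Then for every s ∈ {1,…,Nβ}: (i) Σ_{i=1}^{Nα} (x_{i2} − x_{i1}) · Σ_{j≠s} (y_{j2}* − y_{j1}*) ≤ 0, and (ii) Σ_{i=1}^{Nα} (x_{i2} − x_{i1}) · (y_{s2}* − y_{s1}*) ≤ 0. -/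

import Mathlib

open MeasureTheory RealInnerProductSpace

noncomputable section

/-- The "starred" vector `y* = (-2 y¹, y², …, y^d)`. -/
def ystar {d : ℕ} (hd : 0 < d) (y : EuclideanSpace ℝ (Fin d)) : EuclideanSpace ℝ (Fin d) :=
  y - (3 * y ⟨0, hd⟩) • EuclideanSpace.single (⟨0, hd⟩ : Fin d) (1 : ℝ)

/-- The cost `c(x_1,…,x_Nα,y_1,…,y_Nβ) = ∑_i ∑_j x_i · y_j*`, in block coordinates. -/
def costxy {d Nα Nβ : ℕ} (hd : 0 < d)
    (x : Fin Nα → EuclideanSpace ℝ (Fin d)) (y : Fin Nβ → EuclideanSpace ℝ (Fin d)) : ℝ :=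
  ∑ i : Fin Nα, ∑ j : Fin Nβ, ⟪x i, ystar hd (y j)⟫

theorem stmt_9 {d Nα Nβ : ℕ} (hd : 0 < d) (hNα : 0 < Nα) (hNβ : 0 < Nβ)
    (Xa : Fin Nα → Set (EuclideanSpace ℝ (Fin d)))
    (Xb : Fin Nβ → Set (EuclideanSpace ℝ (Fin d)))
    (hXa : ∀ i, IsOpen (Xa i)) (hXb : ∀ j, IsOpen (Xb j))
    (ua : Fin Nα → EuclideanSpace ℝ (Fin d) → ℝ)
    (ub : Fin Nβ → EuclideanSpace ℝ (Fin d) → ℝ)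
    (hsplit : ∀ (x : Fin Nα → EuclideanSpace ℝ (Fin d))
        (y : Fin Nβ → EuclideanSpace ℝ (Fin d)),
        (∀ i, x i ∈ Xa i) → (∀ j, y j ∈ Xb j) →
        ∑ i, ua i (x i) + ∑ j, ub j (y j) ≤ costxy hd x y)
    (x1 x2 : Fin Nα → EuclideanSpace ℝ (Fin d))
    (y1 y2 : Fin Nβ → EuclideanSpace ℝ (Fin d))
    (hx1 : ∀ i, x1 i ∈ Xa i) (hx2 : ∀ i, x2 i ∈ Xa i)
    (hy1 : ∀ j, y1 j ∈ Xb j) (hy2 : ∀ j, y2 j ∈ Xb j)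
    (hx0 : x1 ⟨0, hNα⟩ = x2 ⟨0, hNα⟩)
    (heq1 : ∑ i, ua i (x1 i) + ∑ j, ub j (y1 j) = costxy hd x1 y1)
    (heq2 : ∑ i, ua i (x2 i) + ∑ j, ub j (y2 j) = costxy hd x2 y2) :
    ∀ s : Fin Nβ,
      ⟪∑ i, (x2 i - x1 i),
          ∑ j ∈ Finset.univ.erase s, (ystar hd (y2 j) - ystar hd (y1 j))⟫ ≤ 0 ∧
      ⟪∑ i, (x2 i - x1 i), ystar hd (y2 s) - ystar hd (y1 s)⟫ ≤ 0 := by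
  intro s
  classical
  have hcost : ∀ (x : Fin Nα → EuclideanSpace ℝ (Fin d))
      (y : Fin Nβ → EuclideanSpace ℝ (Fin d)),
      costxy hd x y = ⟪∑ i, x i, ∑ j, ystar hd (y j)⟫ := by
    intro x y
    simp only [costxy, sum_inner, inner_sum]
    exact Finset.sum_comm
  have hsum_update : ∀ {β : Type} [inst : AddCommGroup β]
      (f : Fin Nβ → EuclideanSpace ℝ (Fin d) → β)
      (g : Fin Nβ → EuclideanSpace ℝ (Fin d)) (v : EuclideanSpace ℝ (Fin d)),
      ∑ j, f j (Function.update g s v j) = ∑ j, f j (g j) - f s (g s) + f s v := by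
    intro β inst f g v
    have h1 : (fun j => f j (Function.update g s v j))
        = Function.update (fun j => f j (g j)) s (f s v) :=
      funext (Function.apply_update (fun j a => f j a) g s v)
    rw [h1, Finset.sum_update_of_mem (Finset.mem_univ s),
      Finset.sdiff_singleton_eq_erase, Finset.sum_erase_eq_sub (Finset.mem_univ s)]
    abel
  set U := Function.update y1 s (y2 s) with hUdef
  set V := Function.update y2 s (y1 s) with hVdef
  have hU : ∀ j, U j ∈ Xb j := by
    intro j
    rcases eq_or_ne j s with rfl | h
    · simpa [hUdef] using hy2 j
    · simpa [hUdef, Function.update_apply, h] using hy1 j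
  have hV : ∀ j, V j ∈ Xb j := by
    intro j
    rcases eq_or_ne j s with rfl | h
    · simpa [hVdef] using hy1 j
    · simpa [hVdef, Function.update_apply, h] using hy2 j
  have hubU : ∑ j, ub j (U j) = ∑ j, ub j (y1 j) - ub s (y1 s) + ub s (y2 s) :=
    hsum_update ub y1 (y2 s)
  have hubV : ∑ j, ub j (V j) = ∑ j, ub j (y2 j) - ub s (y2 s) + ub s (y1 s) :=
    hsum_update ub y2 (y1 s)
  have hysU : ∑ j, ystar hd (U j)
      = ∑ j, ystar hd (y1 j) - ystar hd (y1 s) + ystar hd (y2 s) :=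
    hsum_update (fun _ a => ystar hd a) y1 (y2 s)
  have hysV : ∑ j, ystar hd (V j)
      = ∑ j, ystar hd (y2 j) - ystar hd (y2 s) + ystar hd (y1 s) :=
    hsum_update (fun _ a => ystar hd a) y2 (y1 s)
  have hA := hsplit x1 U hx1 hU
  have hB := hsplit x2 V hx2 hV
  have hC := hsplit x2 U hx2 hU
  have hD := hsplit x1 V hx1 hV
  rw [hcost, hysU, hubU] at hA hC
  rw [hcost, hysV, hubV] at hB hD
  rw [hcost] at heq1 heq2
  have hgoalx : ∑ i, (x2 i - x1 i) = (∑ i, x2 i) - ∑ i, x1 i :=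
    Finset.sum_sub_distrib _ _
  have hgoaly : ∑ j ∈ Finset.univ.erase s, (ystar hd (y2 j) - ystar hd (y1 j))
      = ((∑ j, ystar hd (y2 j)) - ystar hd (y2 s))
        - ((∑ j, ystar hd (y1 j)) - ystar hd (y1 s)) := by
    rw [Finset.sum_sub_distrib, Finset.sum_erase_eq_sub (Finset.mem_univ s),
      Finset.sum_erase_eq_sub (Finset.mem_univ s)]
  rw [hgoalx, hgoaly]
  constructor
  · simp only [inner_sub_left, inner_sub_right, inner_add_right] at hC hD heq1 heq2 ⊢
    linarith
  · simp only [inner_sub_left, inner_sub_right, inner_add_right] at hA hB heq1 heq2 ⊢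
    linarith
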